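/- Let d = 2e where e ≥ 3 is an odd integer. Then, in F_2[X,Y,Z], the identity φ_d = φ_e^2 · (X+Y)(X+Z) holds; moreover X + Y divides φ_d but (X+Y)^2 does not divide φ_d. -/
import Mathlib


open MvPolynomial

theorem phi_two_e_char_two
    (d e : ℕ) (he3 : 3 ≤ e) (heodd : Odd e) (hde : d = 2 * e)
    (φd φe : MvPolynomial (Fin 3) (ZMod 2))
    (hφd : (X 0 + X 1) * (X 0 + X 2) * φd =
      X 0 ^ d + X 1 ^ d + X 2 ^ d + (X 0 + X 1 + X 2) ^ d)
    (hφe : (X 0 + X 1) * (X 0 + X 2) * φe =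
      X 0 ^ e + X 1 ^ e + X 2 ^ e + (X 0 + X 1 + X 2) ^ e) :
    φd = φe ^ 2 * ((X 0 + X 1) * (X 0 + X 2)) ∧
      (X 0 + X 1) ∣ φd ∧ ¬ (X 0 + X 1) ^ 2 ∣ φd := by
  haveI : Fact (Nat.Prime 2) := ⟨Nat.prime_two⟩
  have hA : (X 0 + X 1 : MvPolynomial (Fin 3) (ZMod 2)) ≠ 0 := by
    intro h
    have := congrArg (eval ![1, 0, 0]) h
    simp at this
  have hB : (X 0 + X 2 : MvPolynomial (Fin 3) (ZMod 2)) ≠ 0 := by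
    intro h
    have := congrArg (eval ![1, 0, 0]) h
    simp at this
  -- squaring the e-identity
  have hsq := congrArg (· ^ 2) hφe
  simp only [add_pow_char, ← pow_mul] at hsq
  have heq : φd = φe ^ 2 * ((X 0 + X 1) * (X 0 + X 2)) := by
    apply mul_left_cancel₀ (mul_ne_zero hA hB)
    rw [hφd]
    calc X 0 ^ d + X 1 ^ d + X 2 ^ d + (X 0 + X 1 + X 2) ^ d
        = ((X 0 + X 1) * (X 0 + X 2) * φe) ^ 2 := by
          rw [hsq, hde, mul_comm 2 e]
      _ = (X 0 + X 1) * (X 0 + X 2) * (φe ^ 2 * ((X 0 + X 1) * (X 0 + X 2))) := by ring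
  refine ⟨heq, ⟨φe ^ 2 * (X 0 + X 2), by rw [heq]; ring⟩, ?_⟩
  -- the substitution X 1 ↦ X 0
  set f : MvPolynomial (Fin 3) (ZMod 2) →ₐ[ZMod 2] MvPolynomial (Fin 3) (ZMod 2) :=
    aeval ![X 0, X 0, X 2] with hf
  have hf0 : f (X 0) = X 0 := by simp [hf]
  have hf1 : f (X 1) = X 0 := by simp [hf]
  have hf2 : f (X 2) = X 2 := by simp [hf]
  have hfA : f (X 0 + X 1) = 0 := by
    rw [map_add, hf0, hf1, CharTwo.add_self_eq_zero]
  -- differentiate the e-identity with respect to X 1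
  have hder := congrArg (pderiv (1 : Fin 3)) hφe
  have he1 : ((e : ℕ) : MvPolynomial (Fin 3) (ZMod 2)) = 1 := by
    obtain ⟨k, hk⟩ := heodd
    subst hk
    push_cast
    rw [show ((2 : MvPolynomial (Fin 3) (ZMod 2))) = 0 from by
      exact_mod_cast CharP.cast_eq_zero (MvPolynomial (Fin 3) (ZMod 2)) 2]
    ring
  have h21 : ((2 : Fin 3) = 1) = False := by decide
  have h01 : ((0 : Fin 3) = 1) = False := by decide
  have h11 : ((1 : Fin 3) = 1) = True := by decide
  simp only [pderiv_mul, pderiv_pow, pderiv_X, map_add, Pi.single_apply, he1,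
    h21, h01, h11, if_false, if_true, mul_zero, zero_mul, add_zero, zero_add,
    mul_one, one_mul] at hder
  -- apply f to the differentiated identity
  have h2 := congrArg f hder
  simp only [map_add, map_mul, map_pow, map_one, map_zero, hf0, hf1, hf2, hfA] at h2
  simp only [zero_mul, add_zero, zero_add] at h2
  have hne : (X 0 : MvPolynomial (Fin 3) (ZMod 2)) ^ (e - 1) + X 2 ^ (e - 1) ≠ 0 := by
    intro h
    have := congrArg (eval ![1, 0, 0]) h
    simp [zero_pow (show e - 1 ≠ 0 by omega)] at this
  have hfφe : f φe ≠ 0 := by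
    intro h
    apply hne
    rw [← h2, h, mul_zero]
  -- conclude
  rintro ⟨c, hc⟩
  have hc' : φe ^ 2 * (X 0 + X 2) = (X 0 + X 1) * c := by
    apply mul_left_cancel₀ hA
    have : (X 0 + X 1) * ((X 0 + X 1) * c) = (X 0 + X 1) ^ 2 * c := by ring
    rw [this, ← hc, heq]
    ring
  have := congrArg f hc'
  rw [map_mul, map_mul, map_pow, hfA, zero_mul, map_add, hf0, hf2] at this
  rcases mul_eq_zero.mp this with h | h
  · exact hfφe (pow_eq_zero_iff (n := 2) (by norm_num) |>.mp h)
  · exact hB h
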